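/- Let a ≥ 2 and m ≥ 5 be integers, and let P(x) := x^{2m} − (a·x − 1)^2. Then P(1/a) > 0, P(1/a + a^{−m}) < 0, and P(1/a − a^{−m}) < 0. Consequently, P has at least two distinct real roots in the open interval (1/a − a^{−m}, 1/a + a^{−m}); in particular, P has two distinct real roots whose distance is less than 2·a^{−m}. -/

import Mathlib

open Polynomial

lemma aux_two_mul_lt (m : ℕ) (hm : 5 ≤ m) : 2 * m < 2 ^ (m - 1) := by
  induction m with
  | zero => omega
  | succ n ih =>
    rcases Nat.lt_or_ge n 5 with h | h
    · interval_cases n <;> first | omega | norm_num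
    · have h1 := ih (by omega)
      have h2 : n + 1 - 1 = (n - 1) + 1 := by omega
      rw [h2, pow_succ]
      have : 2 ≤ 2 ^ (n - 1) := Nat.one_lt_two_pow (by omega)
      omega

lemma aux_key (A : ℝ) (m : ℕ) (hA : 2 ≤ A) (hm : 5 ≤ m) :
    (1 + (A ^ (m - 1))⁻¹) ^ m < A := by
  have hA0 : (0:ℝ) < A := by linarith
  have hb : (0:ℝ) < A ^ (m - 1) := by positivity
  have h2 : (2:ℝ) ^ (m - 1) ≤ A ^ (m - 1) := pow_le_pow_left₀ (by norm_num) hA _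
  have hnat : (2 * m : ℝ) < 2 ^ (m - 1) := by
    exact_mod_cast Nat.cast_lt.mpr (aux_two_mul_lt m hm)
  have hmb : (m : ℝ) * (A ^ (m - 1))⁻¹ < 1 / 2 := by
    rw [mul_inv_lt_iff₀ hb]
    linarith
  have step1 : (1 + (A ^ (m - 1))⁻¹) ^ m ≤ Real.exp ((A ^ (m - 1))⁻¹) ^ m := by
    apply pow_le_pow_left₀ (by positivity)
    have := Real.add_one_le_exp ((A ^ (m - 1))⁻¹)
    linarith
  rw [← Real.exp_nat_mul] at step1
  have step2 : Real.exp ((m : ℝ) * (A ^ (m - 1))⁻¹) < Real.exp (1 / 2) :=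
    Real.exp_lt_exp.mpr hmb
  have step3 : Real.exp (1 / 2) < 2 := by
    have hq : Real.exp (1 / 2) * Real.exp (1 / 2) = Real.exp 1 := by
      rw [← Real.exp_add]; norm_num
    nlinarith [Real.exp_pos (1 / 2), Real.exp_one_lt_d9]
  linarith

/-- The Mignotte polynomial `x^{2m} - (a·x - 1)^2` has a cluster of two ill-separated real
roots around `1/a`: it is positive at `1/a` and negative at `1/a ± a^{-m}`, hence has two
distinct real roots at distance less than `2·a^{-m}`. -/
theorem mignotte_cluster
    (a m : ℕ) (ha : 2 ≤ a) (hm : 5 ≤ m)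
    (P : Polynomial ℝ) (hP : P = X ^ (2 * m) - (C (a : ℝ) * X - 1) ^ 2) :
    0 < P.eval ((a : ℝ)⁻¹) ∧
    P.eval ((a : ℝ)⁻¹ + ((a : ℝ) ^ m)⁻¹) < 0 ∧
    P.eval ((a : ℝ)⁻¹ - ((a : ℝ) ^ m)⁻¹) < 0 ∧
    ∃ x y : ℝ, x ≠ y ∧
      x ∈ Set.Ioo ((a : ℝ)⁻¹ - ((a : ℝ) ^ m)⁻¹) ((a : ℝ)⁻¹ + ((a : ℝ) ^ m)⁻¹) ∧
      y ∈ Set.Ioo ((a : ℝ)⁻¹ - ((a : ℝ) ^ m)⁻¹) ((a : ℝ)⁻¹ + ((a : ℝ) ^ m)⁻¹) ∧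
      P.eval x = 0 ∧ P.eval y = 0 ∧ |x - y| < 2 * ((a : ℝ) ^ m)⁻¹ := by
  set A : ℝ := (a : ℝ) with hAdef
  have hA : (2:ℝ) ≤ A := by rw [hAdef]; exact_mod_cast ha
  have hA0 : (0:ℝ) < A := by linarith
  have hA1 : (1:ℝ) < A := by linarith
  have hAne : A ≠ 0 := ne_of_gt hA0
  set u : ℝ := A⁻¹ with hudef
  set h : ℝ := (A ^ m)⁻¹ with hhdef
  have hu0 : 0 < u := by positivity
  have hh0 : 0 < h := by positivity
  have heval : ∀ x : ℝ, P.eval x = x ^ (2 * m) - (A * x - 1) ^ 2 := by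
    intro x; simp [hP]
  -- h < u
  have hpowlt : A ^ 1 < A ^ m := pow_lt_pow_right₀ hA1 (by omega)
  have hhu : h < u := by
    rw [hudef, hhdef]
    apply inv_strictAnti₀ hA0
    simpa using hpowlt
  -- Goal 1
  have g1 : 0 < P.eval u := by
    rw [heval]
    have : A * u - 1 = 0 := by
      rw [hudef, mul_inv_cancel₀ hAne]; ring
    rw [this]
    have : (0:ℝ) < u ^ (2 * m) := by positivity
    simpa using this
  -- key: (u + h) ^ m < A * h
  have hmm : m - 1 + 1 = m := by omega
  have hbu : u + h = u * (1 + (A ^ (m - 1))⁻¹) := by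
    rw [hudef, hhdef]
    have : A ^ m = A ^ (m - 1) * A := by rw [← pow_succ, hmm]
    rw [this]
    field_simp
  have hAh : A * h = (u ^ m) * A := by
    rw [hudef, hhdef, inv_pow]
    ring
  have hkey : (u + h) ^ m < A * h := by
    rw [hbu, mul_pow, hAh]
    exact mul_lt_mul_of_pos_left (aux_key A m hA hm) (by positivity)
  -- Goal 2
  have g2 : P.eval (u + h) < 0 := by
    rw [heval]
    have e1 : A * (u + h) - 1 = A * h := by
      rw [hudef]; field_simp; ring
    rw [e1, sub_neg]
    have hx0 : 0 ≤ (u + h) ^ m := by positivity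
    calc (u + h) ^ (2 * m) = ((u + h) ^ m) ^ 2 := by rw [← pow_mul, Nat.mul_comm]
      _ < (A * h) ^ 2 := by apply pow_lt_pow_left₀ hkey hx0; norm_num
  -- Goal 3
  have g3 : P.eval (u - h) < 0 := by
    rw [heval]
    have e1 : A * (u - h) - 1 = -(A * h) := by
      rw [hudef]; field_simp; ring
    rw [e1, neg_sq, sub_neg]
    have hx0 : 0 ≤ u - h := by linarith
    have hstep : (u - h) ^ m < A * h := by
      calc (u - h) ^ m ≤ u ^ m := pow_le_pow_left₀ hx0 (by linarith) m
        _ < A * h := by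
            rw [hAh]
            nlinarith [pow_pos hu0 m]
    calc (u - h) ^ (2 * m) = ((u - h) ^ m) ^ 2 := by rw [← pow_mul, Nat.mul_comm]
      _ < (A * h) ^ 2 := by
          apply pow_lt_pow_left₀ hstep (by positivity); norm_num
  refine ⟨g1, g2, g3, ?_⟩
  obtain ⟨x, hx, hfx⟩ := intermediate_value_Icc (by linarith : u - h ≤ u)
    (P.continuous.continuousOn) (Set.mem_Icc.mpr ⟨le_of_lt g3, le_of_lt g1⟩)
  obtain ⟨y, hy, hfy⟩ := intermediate_value_Icc' (by linarith : u ≤ u + h)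
    (P.continuous.continuousOn) (Set.mem_Icc.mpr ⟨le_of_lt g2, le_of_lt g1⟩)
  have hxlt : x < u := by
    rcases lt_or_eq_of_le hx.2 with h' | h'
    · exact h'
    · rw [h'] at hfx; linarith
  have hxgt : u - h < x := by
    rcases lt_or_eq_of_le hx.1 with h' | h'
    · exact h'
    · rw [← h'] at hfx; linarith
  have hygt : u < y := by
    rcases lt_or_eq_of_le hy.1 with h' | h'
    · exact h'
    · rw [← h'] at hfy; linarith
  have hylt : y < u + h := by
    rcases lt_or_eq_of_le hy.2 with h' | h'
    · exact h'
    · rw [h'] at hfy; linarith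
  refine ⟨x, y, ne_of_lt (by linarith), ⟨hxgt, by linarith⟩, ⟨by linarith, hylt⟩, hfx, hfy, ?_⟩
  rw [abs_sub_lt_iff]
  constructor <;> linarith
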